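/- Let n ≥ 3, let K ⊆ ℝⁿ be a proper subdual cone, and let A ∈ ℝ^{n×n} be a symmetric nonsingular matrix with eigenvalues λ₁ ≤ λ₂ ≤ ⋯ ≤ λₙ (counted with multiplicity, with a corresponding orthonormal system of eigenvectors). Suppose that the function x ↦ ⟨Ax, x⟩ is not constant on S^{n−1} ∩ K, and that the sublevel set [φ_A ≤ c] = {x ∈ int(K) : ⟨Ax, x⟩ ≤ c‖x‖²} is convex for every c ∈ ℝ (the paper's characterization of q_A(x) = ⟨Ax, x⟩ being spherically quasi-convex). Then: (i) λ₁ < λ₂; and (ii) either λ₂ ≤ ⟨Ax, x⟩ for all x ∈ S^{n−1} ∩ K, or ⟨Ax, x⟩ ≤ λ₂ for all x ∈ S^{n−1} ∩ K. -/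
import Mathlib


open scoped RealInnerProductSpace

/-- The quadratic form `x ↦ ⟨A x, x⟩` associated with a matrix `A`. -/
noncomputable def quadForm {n : ℕ} (A : Matrix (Fin n) (Fin n) ℝ)
    (x : EuclideanSpace ℝ (Fin n)) : ℝ :=
  ⟪Matrix.toEuclideanLin A x, x⟫

/-- `K` is a cone: closed under multiplication by positive scalars. -/
def IsCone {n : ℕ} (K : Set (EuclideanSpace ℝ (Fin n))) : Prop :=
  ∀ ⦃t : ℝ⦄, 0 < t → ∀ ⦃x⦄, x ∈ K → t • x ∈ K

/-- A proper cone: a pointed closed convex cone with nonempty interior. -/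
def IsProperCone {n : ℕ} (K : Set (EuclideanSpace ℝ (Fin n))) : Prop :=
  IsCone K ∧ Convex ℝ K ∧ IsClosed K ∧ K ∩ (-K) ⊆ {0} ∧ (interior K).Nonempty

/-- The dual cone `K* = {u : ⟨u, y⟩ ≥ 0 for all y ∈ K}`. -/
def dualCone {n : ℕ} (K : Set (EuclideanSpace ℝ (Fin n))) : Set (EuclideanSpace ℝ (Fin n)) :=
  {u | ∀ y ∈ K, 0 ≤ ⟪u, y⟫}

/-- The sublevel set `[φ_A ≤ c] = {x ∈ int K : ⟨A x, x⟩ ≤ c ‖x‖²}`. -/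
noncomputable def sublevel {n : ℕ} (A : Matrix (Fin n) (Fin n) ℝ)
    (K : Set (EuclideanSpace ℝ (Fin n))) (c : ℝ) : Set (EuclideanSpace ℝ (Fin n)) :=
  {x ∈ interior K | quadForm A x ≤ c * ‖x‖ ^ 2}

set_option maxHeartbeats 2000000 in
/-- Proposition 3 of the paper: if `A` is symmetric nonsingular, `q_A` is not constant
on `S^{n-1} ∩ K` and all sublevel sets `[φ_A ≤ c]` are convex, then `λ₁ < λ₂` and
either `λ₂ ≤ q_A` on `S^{n-1} ∩ K` or `q_A ≤ λ₂` on `S^{n-1} ∩ K`. -/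
theorem stmt9 (n : ℕ) [NeZero n] (hn : 3 ≤ n)
    (K : Set (EuclideanSpace ℝ (Fin n))) (hK : IsProperCone K) (hsub : K ⊆ dualCone K)
    (A : Matrix (Fin n) (Fin n) ℝ) (hA : A.IsSymm) (hdet : A.det ≠ 0)
    (v : Fin n → EuclideanSpace ℝ (Fin n)) (hv : Orthonormal ℝ v)
    (lam : Fin n → ℝ) (heig : ∀ i, Matrix.toEuclideanLin A (v i) = lam i • v i)
    (hmono : Monotone lam)
    (hnc : ¬ ∀ x ∈ K, ∀ y ∈ K, ‖x‖ = 1 → ‖y‖ = 1 → quadForm A x = quadForm A y)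
    (hconv : ∀ c : ℝ, Convex ℝ (sublevel A K c)) :
    lam 0 < lam 1 ∧
      ((∀ x ∈ K, ‖x‖ = 1 → lam 1 ≤ quadForm A x) ∨
        (∀ x ∈ K, ‖x‖ = 1 → quadForm A x ≤ lam 1)) := by
  classical
  have hT : (Matrix.toEuclideanLin A).IsSymmetric :=
    Matrix.isHermitian_iff_isSymmetric.mp
      ((Matrix.conjTranspose_eq_transpose_of_trivial A).trans hA)
  set T := Matrix.toEuclideanLin A with hTdef
  -- basic algebraic facts about quadForm
  have hq_smul : ∀ (t : ℝ) (z : EuclideanSpace ℝ (Fin n)),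
      quadForm A (t • z) = t ^ 2 * quadForm A z := by
    intro t z
    simp only [quadForm, map_smul, real_inner_smul_left, real_inner_smul_right, ← hTdef]
    ring
  have hq_expand : ∀ (z u : EuclideanSpace ℝ (Fin n)) (ε : ℝ),
      quadForm A (z + ε • u) = quadForm A z + 2 * ε * ⟪T z, u⟫ + ε ^ 2 * quadForm A u := by
    intro z u ε
    have h1 : ⟪T u, z⟫ = ⟪T z, u⟫ := (hT u z).trans (real_inner_comm _ _)
    simp only [quadForm, map_add, map_smul, inner_add_left, inner_add_right,
      real_inner_smul_left, real_inner_smul_right, ← hTdef]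
    rw [h1]; ring
  -- scaling the interior of the cone
  have hIntScale : ∀ {t : ℝ}, 0 < t → ∀ {z : EuclideanSpace ℝ (Fin n)},
      z ∈ interior K → t • z ∈ interior K := by
    intro t ht z hz
    have hopen : IsOpen ((t • ·) '' interior K) := (isOpenMap_smul₀ ht.ne') _ isOpen_interior
    have hsub2 : (t • ·) '' interior K ⊆ K := by
      rintro _ ⟨w, hw, rfl⟩; exact hK.1 ht (interior_subset hw)
    exact interior_maximal hsub2 hopen ⟨z, hz, rfl⟩
  -- Fin facts
  have h01ne : (0 : Fin n) ≠ 1 := by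
    apply Fin.ne_of_val_ne
    simp [Fin.val_one', Nat.mod_eq_of_lt (by omega : 1 < n)]
  have h01le : lam 0 ≤ lam 1 := hmono (Fin.zero_le _)
  -- inner products of v 0, v 1
  have h00 : ⟪v 0, v 0⟫ = 1 := by
    rw [real_inner_self_eq_norm_sq, hv.1 0]; norm_num
  have h11 : ⟪v 1, v 1⟫ = 1 := by
    rw [real_inner_self_eq_norm_sq, hv.1 1]; norm_num
  have h01 : ⟪v 0, v 1⟫ = 0 := hv.2 h01ne
  have h10 : ⟪v 1, v 0⟫ = 0 := by rw [real_inner_comm]; exact h01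
  -- quadratic form on span of v 0, v 1
  have hqspan : ∀ α γ : ℝ, quadForm A (α • v 0 + γ • v 1)
      = lam 0 * α ^ 2 + lam 1 * γ ^ 2 := by
    intro α γ
    simp only [quadForm, map_add, map_smul, heig, inner_add_left, inner_add_right,
      real_inner_smul_left, real_inner_smul_right, h00, h11, h01, h10, ← hTdef]
    ring
  have hnspan : ∀ α γ : ℝ, ‖α • v 0 + γ • v 1‖ ^ 2 = α ^ 2 + γ ^ 2 := by
    intro α γ
    rw [← real_inner_self_eq_norm_sq]
    simp only [inner_add_left, inner_add_right, real_inner_smul_left, real_inner_smul_right,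
      h00, h11, h01, h10]
    ring
  -- existence of a unit vector in span {v 0, v 1} orthogonal to a given vector
  have hu_exists : ∀ w : EuclideanSpace ℝ (Fin n),
      ∃ u, ‖u‖ = 1 ∧ ⟪w, u⟫ = 0 ∧ quadForm A u ≤ lam 1 := by
    intro w
    by_cases h0 : ⟪w, v 0⟫ = 0
    · refine ⟨v 0, hv.1 0, h0, ?_⟩
      have h := hqspan 1 0
      simp only [one_smul, zero_smul, add_zero] at h
      rw [h]; nlinarith
    · set α : ℝ := ⟪w, v 1⟫ with hα
      set γ : ℝ := -⟪w, v 0⟫ with hγ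
      set u0 : EuclideanSpace ℝ (Fin n) := α • v 0 + γ • v 1 with hu0
      have hwu0 : ⟪w, u0⟫ = 0 := by
        simp only [hu0, inner_add_right, real_inner_smul_right, hα, hγ]
        ring
      have hu0ne : u0 ≠ 0 := by
        intro h
        apply h0
        have h2 : ⟪u0, v 1⟫ = 0 := by rw [h, inner_zero_left]
        simp only [hu0, inner_add_left, real_inner_smul_left, h01, h11, hγ] at h2
        linarith [h2]
      have hn0 : (0:ℝ) < ‖u0‖ := norm_pos_iff.mpr hu0ne
      have hu11 : ‖‖u0‖⁻¹ • u0‖ = 1 := by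
        rw [norm_smul, norm_inv, norm_norm, inv_mul_cancel₀ hn0.ne']
      refine ⟨‖u0‖⁻¹ • u0, hu11, ?_, ?_⟩
      · rw [real_inner_smul_right, hwu0, mul_zero]
      · have hs : ‖u0‖⁻¹ • u0 = (‖u0‖⁻¹ * α) • v 0 + (‖u0‖⁻¹ * γ) • v 1 := by
          simp only [hu0, smul_add, smul_smul]
        have hnq : (‖u0‖⁻¹ * α) ^ 2 + (‖u0‖⁻¹ * γ) ^ 2 = 1 := by
          have h2 := hnspan (‖u0‖⁻¹ * α) (‖u0‖⁻¹ * γ)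
          rw [← hs, hu11] at h2
          simpa using h2.symm
        rw [hs, hqspan]
        have hx1 : lam 0 * (‖u0‖⁻¹ * α) ^ 2 ≤ lam 1 * (‖u0‖⁻¹ * α) ^ 2 :=
          mul_le_mul_of_nonneg_right h01le (sq_nonneg _)
        calc lam 0 * (‖u0‖⁻¹ * α) ^ 2 + lam 1 * (‖u0‖⁻¹ * γ) ^ 2
            ≤ lam 1 * (‖u0‖⁻¹ * α) ^ 2 + lam 1 * (‖u0‖⁻¹ * γ) ^ 2 := by linarith
          _ = lam 1 * ((‖u0‖⁻¹ * α) ^ 2 + (‖u0‖⁻¹ * γ) ^ 2) := by ring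
          _ = lam 1 := by rw [hnq, mul_one]
  -- the key perturbation lemma
  have key : ∀ y ∈ interior K, ‖y‖ = 1 → ∀ u : EuclideanSpace ℝ (Fin n), ‖u‖ = 1 →
      ⟪T y, u⟫ = quadForm A y * ⟪y, u⟫ → quadForm A y ≤ quadForm A u := by
    intro y hy hy1 u hu1 horth
    obtain ⟨δ, hδ, hball⟩ := Metric.isOpen_iff.mp isOpen_interior y hy
    set ε : ℝ := min (δ / 2) (1 / 2) with hεdef
    have hε0 : 0 < ε := lt_min (by linarith) (by norm_num)
    have hεδ : ε < δ := lt_of_le_of_lt (min_le_left _ _) (by linarith)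
    have hε1 : ε ≤ 1 / 2 := min_le_right _ _
    set s : ℝ := ⟪y, u⟫ with hsdef
    have hs : |s| ≤ 1 := by
      have h := abs_real_inner_le_norm y u
      rwa [hy1, hu1, one_mul] at h
    have hmem : ∀ c : ℝ, |c| = ε → y + c • u ∈ interior K := by
      intro c hc
      apply hball
      rw [Metric.mem_ball, dist_eq_norm, add_sub_cancel_left, norm_smul, hu1, mul_one,
        Real.norm_eq_abs, hc]
      exact hεδ
    have hnorm : ∀ c : ℝ, ‖y + c • u‖ ^ 2 = 1 + 2 * c * s + c ^ 2 := by
      intro c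
      rw [norm_add_sq_real, real_inner_smul_right, norm_smul, hy1, hu1,
        Real.norm_eq_abs, mul_one, one_pow]
      rw [sq_abs, ← hsdef]
      ring
    have hnormpos : ∀ c : ℝ, |c| = ε → 0 < ‖y + c • u‖ ^ 2 := by
      intro c hc
      rw [hnorm]
      have ha : |c| ≤ 1 / 2 := hc ▸ hε1
      have hcs2 : -|c| ≤ c * s := by
        have h1 : |c * s| ≤ |c| := by
          rw [abs_mul]
          calc |c| * |s| ≤ |c| * 1 := mul_le_mul_of_nonneg_left hs (abs_nonneg c)
            _ = |c| := mul_one _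
        linarith [neg_abs_le (c * s), abs_le.mp h1]
      nlinarith [sq_abs c, hcs2, ha,
        mul_nonneg (by linarith : (0:ℝ) ≤ 1/2 - |c|) (by linarith : (0:ℝ) ≤ 3/2 - |c|)]
    have hfinal : ∀ c : ℝ, |c| = ε →
        quadForm A y ≤ quadForm A (y + c • u) / ‖y + c • u‖ ^ 2 →
        quadForm A y ≤ quadForm A u := by
      intro c hc hle
      have hpos : 0 < ‖y + c • u‖ ^ 2 := hnormpos c hc
      rw [le_div_iff₀ hpos] at hle
      rw [hnorm c, hq_expand y u c, horth] at hle
      have hc2 : c ^ 2 = ε ^ 2 := by rw [← sq_abs, hc]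
      have hε2 : 0 < ε ^ 2 := pow_pos hε0 2
      nlinarith [hle, hc2, hε2]
    have hmP : y + ε • u ∈ interior K := hmem ε (abs_of_pos hε0)
    have hmM : y + (-ε) • u ∈ interior K := hmem (-ε) (by rw [abs_neg, abs_of_pos hε0])
    have hposP : 0 < ‖y + ε • u‖ ^ 2 := hnormpos ε (abs_of_pos hε0)
    have hposM : 0 < ‖y + (-ε) • u‖ ^ 2 := hnormpos (-ε) (by rw [abs_neg, abs_of_pos hε0])
    set cmax : ℝ := max (quadForm A (y + ε • u) / ‖y + ε • u‖ ^ 2)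
      (quadForm A (y + (-ε) • u) / ‖y + (-ε) • u‖ ^ 2) with hcmax
    have hinP : y + ε • u ∈ sublevel A K cmax := by
      refine ⟨hmP, ?_⟩
      rw [← div_mul_cancel₀ (quadForm A (y + ε • u)) (ne_of_gt hposP)]
      exact mul_le_mul_of_nonneg_right (le_max_left _ _) hposP.le
    have hinM : y + (-ε) • u ∈ sublevel A K cmax := by
      refine ⟨hmM, ?_⟩
      rw [← div_mul_cancel₀ (quadForm A (y + (-ε) • u)) (ne_of_gt hposM)]
      exact mul_le_mul_of_nonneg_right (le_max_right _ _) hposM.le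
    have hmid : (1/2 : ℝ) • (y + ε • u) + (1/2 : ℝ) • (y + (-ε) • u) = y := by module
    have hymem : y ∈ sublevel A K cmax := by
      rw [← hmid]
      exact hconv cmax hinP hinM (by norm_num) (by norm_num) (by norm_num)
    have hqy : quadForm A y ≤ cmax := by
      have h := hymem.2
      rwa [hy1, one_pow, mul_one] at h
    rcases max_choice (quadForm A (y + ε • u) / ‖y + ε • u‖ ^ 2)
        (quadForm A (y + (-ε) • u) / ‖y + (-ε) • u‖ ^ 2) with h | h
    · exact hfinal ε (abs_of_pos hε0) (hqy.trans_eq (hcmax.trans h))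
    · exact hfinal (-ε) (by rw [abs_neg, abs_of_pos hε0]) (hqy.trans_eq (hcmax.trans h))
  -- the core bound on the interior
  have core : ∀ y ∈ interior K, ‖y‖ = 1 → quadForm A y ≤ lam 1 := by
    intro y hy hy1
    obtain ⟨u, hu1, huw, hqu⟩ := hu_exists (T y - quadForm A y • y)
    have horth : ⟪T y, u⟫ = quadForm A y * ⟪y, u⟫ := by
      rw [inner_sub_left, real_inner_smul_left] at huw
      linarith
    exact le_trans (key y hy hy1 u hu1 horth) hqu
  -- extension to all of K by continuity
  obtain ⟨e, he⟩ := hK.2.2.2.2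
  have coreK : ∀ x ∈ K, ‖x‖ = 1 → quadForm A x ≤ lam 1 := by
    intro x hx hx1
    set f : ℝ → EuclideanSpace ℝ (Fin n) := fun t => t • e + (1 - t) • x with hf
    have hTc : Continuous T := T.continuous_of_finiteDimensional
    have hqc : Continuous fun z : EuclideanSpace ℝ (Fin n) => quadForm A z := by
      have h : Continuous fun z : EuclideanSpace ℝ (Fin n) => ⟪T z, z⟫ :=
        hTc.inner continuous_id
      simpa [quadForm, ← hTdef] using h
    have hfc : Continuous f := by
      apply Continuous.add
      · exact continuous_id.smul continuous_const
      · exact (continuous_const.sub continuous_id).smul continuous_const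
    set g : ℝ → ℝ := fun t => lam 1 * ‖f t‖ ^ 2 - quadForm A (f t) with hg
    have hgc : Continuous g := by
      apply Continuous.sub
      · exact continuous_const.mul ((hfc.norm).pow 2)
      · exact hqc.comp hfc
    set t0 : ℝ := 1 / (1 + ‖e‖) with ht0
    have ht0pos : 0 < t0 := by
      apply div_pos one_pos
      have := norm_nonneg e
      linarith
    have hub : ∀ t ∈ Set.Ioo (0:ℝ) t0, 0 ≤ g t := by
      intro t ht
      obtain ⟨ht1, ht2⟩ := ht
      have ht01 : t < 1 := by
        have h1 : t0 ≤ 1 := by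
          rw [ht0, div_le_one (by positivity)]
          linarith [norm_nonneg e]
        linarith
      have hint : f t ∈ interior K :=
        hK.2.1.combo_interior_closure_mem_interior he (subset_closure hx) ht1
          (by linarith) (by ring)
      have hfnorm : 0 < ‖f t‖ := by
        have h1 : ‖(1 - t) • x‖ ≤ ‖f t‖ + ‖t • e‖ := by
          have h2 := norm_le_add_norm_add ((1 - t) • x) (t • e)
          have heq : (1 - t) • x + t • e = f t := by rw [hf]; module
          rwa [heq] at h2
        rw [norm_smul, norm_smul, hx1, mul_one, Real.norm_eq_abs, Real.norm_eq_abs] at h1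
        rw [abs_of_pos (by linarith : (0:ℝ) < 1 - t), abs_of_pos ht1] at h1
        have h4 : t * (1 + ‖e‖) < 1 := by
          calc t * (1 + ‖e‖) < t0 * (1 + ‖e‖) :=
                mul_lt_mul_of_pos_right ht2 (by linarith [norm_nonneg e])
            _ = 1 := by rw [ht0]; field_simp
        nlinarith [norm_nonneg (f t)]
      have hz' : ‖f t‖⁻¹ • f t ∈ interior K := hIntScale (inv_pos.mpr hfnorm) hint
      have hz'1 : ‖‖f t‖⁻¹ • f t‖ = 1 := by
        rw [norm_smul, norm_inv, norm_norm, inv_mul_cancel₀ hfnorm.ne']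
      have hcore := core _ hz' hz'1
      rw [hq_smul] at hcore
      have hr2 : 0 < ‖f t‖ ^ 2 := pow_pos hfnorm 2
      have h5 : quadForm A (f t) = ‖f t‖ ^ 2 * ((‖f t‖⁻¹) ^ 2 * quadForm A (f t)) := by
        field_simp
      have h6 := mul_le_mul_of_nonneg_left hcore hr2.le
      simp only [hg]
      rw [h5]
      nlinarith [h6]
    have hg0 : g 0 = lam 1 - quadForm A x := by
      have hf0 : f 0 = x := by rw [hf]; simp
      simp only [hg, hf0, hx1]
      norm_num
    have htend : Filter.Tendsto g (nhdsWithin 0 (Set.Ioi 0)) (nhds (g 0)) :=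
      (hgc.tendsto 0).mono_left nhdsWithin_le_nhds
    have h0le : 0 ≤ g 0 :=
      ge_of_tendsto htend (Filter.eventually_of_mem
        (Ioo_mem_nhdsGT_of_mem ⟨le_refl (0:ℝ), ht0pos⟩) hub)
    rw [hg0] at h0le
    linarith
  -- minimal eigenvalue bound
  have mineig : ∀ x : EuclideanSpace ℝ (Fin n), lam 0 * ‖x‖ ^ 2 ≤ quadForm A x := by
    have hcard : Fintype.card (Fin n) = Module.finrank ℝ (EuclideanSpace ℝ (Fin n)) := by
      simp [finrank_euclideanSpace_fin]
    have hsp : ⊤ ≤ Submodule.span ℝ (Set.range v) := by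
      rw [← coe_basisOfOrthonormalOfCardEqFinrank hv hcard]
      exact (basisOfOrthonormalOfCardEqFinrank hv hcard).span_eq.ge
    set b : OrthonormalBasis (Fin n) ℝ (EuclideanSpace ℝ (Fin n)) :=
      OrthonormalBasis.mk hv hsp with hb
    have hbv : ⇑b = v := OrthonormalBasis.coe_mk _ _
    intro x
    have h1 : ∑ i, ⟪T x, b i⟫ * ⟪b i, x⟫ = ⟪T x, x⟫ := b.sum_inner_mul_inner _ _
    have h2 : ∑ i, ⟪x, b i⟫ * ⟪b i, x⟫ = ⟪x, x⟫ := b.sum_inner_mul_inner _ _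
    have hterm : ∀ i, ⟪T x, b i⟫ = lam i * ⟪b i, x⟫ := by
      intro i
      rw [hbv]
      calc ⟪T x, v i⟫ = ⟪x, T (v i)⟫ := hT x (v i)
        _ = lam i * ⟪x, v i⟫ := by rw [heig i, real_inner_smul_right]
        _ = lam i * ⟪v i, x⟫ := by rw [real_inner_comm]
    have hqx : quadForm A x = ∑ i, lam i * (⟪b i, x⟫ * ⟪b i, x⟫) := by
      have h3 : quadForm A x = ⟪T x, x⟫ := by simp only [quadForm, ← hTdef]
      rw [h3, ← h1]
      exact Finset.sum_congr rfl fun i _ => by rw [hterm i]; ring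
    have hnx : ‖x‖ ^ 2 = ∑ i, ⟪b i, x⟫ * ⟪b i, x⟫ := by
      rw [← real_inner_self_eq_norm_sq, ← h2]
      exact Finset.sum_congr rfl fun i _ => by rw [real_inner_comm x (b i)]
    rw [hqx, hnx, Finset.mul_sum]
    apply Finset.sum_le_sum
    intro i _
    exact mul_le_mul_of_nonneg_right (hmono (Fin.zero_le i)) (mul_self_nonneg _)
  -- conclusion
  constructor
  · by_contra hlt
    push_neg at hlt
    have heql : lam 1 = lam 0 := le_antisymm hlt h01le
    push_neg at hnc
    obtain ⟨x, hx, y, hy, hx1, hy1, hne⟩ := hnc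
    apply hne
    have e1 := coreK x hx hx1
    have e2 := mineig x
    have e3 := coreK y hy hy1
    have e4 := mineig y
    rw [hx1] at e2
    rw [hy1] at e4
    rw [heql] at e1 e3
    norm_num at e2 e4
    linarith
  · exact Or.inr coreK
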